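/- Let 0 < m < 1, 0 < r < 1 and k > 0, and define f : ℝ₊ → ℝ by f(u) = (u − 1)u^m + k u^r. Then f satisfies the growth and dissipativity conditions with exponent p = m + 2 on the positive half-line: there exist constants C₁, C₂, α > 0 such that for all u ≥ 0, |f(u)|^{(m+2)/(m+1)} ≤ C₁(1 + u^{m+2}) and f(u)·u ≥ α u^{m+2} − C₂. -/
import Mathlib


/-- the nonlinearity `f(u) = (u − 1)u^m + k u^r` of the model of
fractional-order chemical autocatalysis with decay satisfies, on the positive half-line,
the growth and dissipativity conditions with exponent `p = m + 2`:
`|f(u)|^{(m+2)/(m+1)} ≤ C₁(1 + u^{m+2})` and `f(u)·u ≥ α u^{m+2} − C₂`. -/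
theorem autocatalysis_growth_dissipativity
    (m r k : ℝ) (hm0 : 0 < m) (hm1 : m < 1) (hr0 : 0 < r) (hr1 : r < 1) (hk : 0 < k) :
    ∃ C₁ C₂ α : ℝ, 0 < C₁ ∧ 0 < C₂ ∧ 0 < α ∧
      ∀ u : ℝ, 0 ≤ u →
        (|(u - 1) * u ^ m + k * u ^ r| ^ ((m + 2) / (m + 1)) ≤ C₁ * (1 + u ^ (m + 2))) ∧
        (α * u ^ (m + 2) - C₂ ≤ ((u - 1) * u ^ m + k * u ^ r) * u) := by
  have hq0 : (0:ℝ) < (m + 2) / (m + 1) := by positivity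
  refine ⟨(1 + k) ^ ((m + 2) / (m + 1)) * 2 ^ (m + 2), 4, 1/2, by positivity, by norm_num,
    by norm_num, ?_⟩
  intro u hu
  rcases eq_or_lt_of_le hu with h0 | h0
  · -- u = 0
    rw [← h0]
    simp only [Real.zero_rpow hm0.ne', Real.zero_rpow hr0.ne',
      Real.zero_rpow (by positivity : (0:ℝ) < m + 2).ne', mul_zero, add_zero, zero_mul,
      abs_zero, Real.zero_rpow hq0.ne']
    constructor
    · positivity
    · norm_num
  · -- u > 0
    have hum : (0:ℝ) ≤ u ^ m := Real.rpow_nonneg hu m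
    have hur : (0:ℝ) ≤ u ^ r := Real.rpow_nonneg hu r
    have h1u : (0:ℝ) < 1 + u := by linarith
    have e2 : u ^ (m + 2) = u ^ (m + 1) * u := by
      rw [show m + 2 = (m + 1) + 1 by ring, Real.rpow_add h0, Real.rpow_one]
    have e1 : u ^ (m + 1) = u ^ m * u := by
      rw [Real.rpow_add h0, Real.rpow_one]
    constructor
    · -- growth
      have habs : |(u - 1) * u ^ m + k * u ^ r| ≤ (1 + k) * (1 + u) ^ (m + 1) := by
        have em : (1 + u) * (1 + u) ^ m = (1 + u) ^ (m + 1) := by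
          rw [Real.rpow_add h1u, Real.rpow_one]; ring
        calc |(u - 1) * u ^ m + k * u ^ r|
            ≤ |(u - 1) * u ^ m| + |k * u ^ r| := abs_add_le _ _
          _ = |u - 1| * u ^ m + k * u ^ r := by
              rw [abs_mul, abs_mul, abs_of_nonneg hum, abs_of_nonneg hur, abs_of_pos hk]
          _ ≤ (1 + u) * (1 + u) ^ m + k * (1 + u) ^ (m + 1) := by
              have hb1 : |u - 1| ≤ 1 + u := by
                calc |u - 1| ≤ |u| + |1| := abs_sub _ _
                  _ = u + 1 := by rw [abs_of_nonneg hu, abs_one]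
                  _ = 1 + u := by ring
              have hb2 : u ^ m ≤ (1 + u) ^ m :=
                Real.rpow_le_rpow hu (by linarith) hm0.le
              have hb3 : u ^ r ≤ (1 + u) ^ (m + 1) := by
                calc u ^ r ≤ (1 + u) ^ r :=
                    Real.rpow_le_rpow hu (by linarith) hr0.le
                  _ ≤ (1 + u) ^ (m + 1) :=
                    Real.rpow_le_rpow_of_exponent_le (by linarith) (by linarith)
              exact add_le_add
                (mul_le_mul hb1 hb2 hum (by linarith))
                (mul_le_mul_of_nonneg_left hb3 hk.le)
          _ = (1 + k) * (1 + u) ^ (m + 1) := by rw [em]; ring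
      have h2 : |(u - 1) * u ^ m + k * u ^ r| ^ ((m + 2) / (m + 1)) ≤
          ((1 + k) * (1 + u) ^ (m + 1)) ^ ((m + 2) / (m + 1)) :=
        Real.rpow_le_rpow (abs_nonneg _) habs hq0.le
      have h3 : ((1 + k) * (1 + u) ^ (m + 1)) ^ ((m + 2) / (m + 1)) =
          (1 + k) ^ ((m + 2) / (m + 1)) * (1 + u) ^ (m + 2) := by
        rw [Real.mul_rpow (by positivity) (by positivity), ← Real.rpow_mul h1u.le]
        congr 1
        field_simp
      have h4 : (1 + u) ^ (m + 2) ≤ 2 ^ (m + 2) * (1 + u ^ (m + 2)) := by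
        rcases le_total u 1 with hu1 | hu1
        · have : (1 + u) ^ (m + 2) ≤ (2:ℝ) ^ (m + 2) :=
            Real.rpow_le_rpow h1u.le (by linarith) (by linarith)
          nlinarith [Real.rpow_nonneg (le_of_lt h0) (m + 2),
            Real.rpow_nonneg (show (0:ℝ) ≤ 2 by norm_num) (m + 2)]
        · have h2u : (1 + u) ^ (m + 2) ≤ (2 * u) ^ (m + 2) :=
            Real.rpow_le_rpow h1u.le (by linarith) (by linarith)
          rw [Real.mul_rpow (by norm_num) hu] at h2u
          nlinarith [Real.rpow_pos_of_pos (show (0:ℝ) < 2 by norm_num) (m + 2)]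
      calc |(u - 1) * u ^ m + k * u ^ r| ^ ((m + 2) / (m + 1))
          ≤ (1 + k) ^ ((m + 2) / (m + 1)) * (1 + u) ^ (m + 2) := h3 ▸ h2
        _ ≤ (1 + k) ^ ((m + 2) / (m + 1)) * (2 ^ (m + 2) * (1 + u ^ (m + 2))) := by
            have : (0:ℝ) ≤ (1 + k) ^ ((m + 2) / (m + 1)) := by positivity
            nlinarith
        _ = (1 + k) ^ ((m + 2) / (m + 1)) * 2 ^ (m + 2) * (1 + u ^ (m + 2)) := by ring
    · -- dissipativity
      have e3 : u ^ (r + 1) = u ^ r * u := by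
        rw [Real.rpow_add h0, Real.rpow_one]
      have he : ((u - 1) * u ^ m + k * u ^ r) * u =
          u ^ (m + 2) - u ^ (m + 1) + k * u ^ (r + 1) := by
        rw [e2, e1, e3]; ring
      have hkr : (0:ℝ) ≤ k * u ^ (r + 1) := by positivity
      have key : u ^ (m + 1) ≤ (1/2) * u ^ (m + 2) + 4 := by
        rcases le_total u 2 with hu2 | hu2
        · have h1 : u ^ (m + 1) ≤ (2:ℝ) ^ (m + 1) :=
            Real.rpow_le_rpow hu hu2 (by linarith)
          have h2' : (2:ℝ) ^ (m + 1) ≤ (2:ℝ) ^ (2:ℝ) :=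
            Real.rpow_le_rpow_of_exponent_le one_le_two (by linarith)
          have h3' : (2:ℝ) ^ (2:ℝ) = 4 := by
            rw [show (2:ℝ) = ((2:ℕ):ℝ) from by norm_num, Real.rpow_natCast]; norm_num
          have : (0:ℝ) ≤ u ^ (m + 2) := Real.rpow_nonneg hu _
          linarith
        · have h1 : 2 * u ^ (m + 1) ≤ u * u ^ (m + 1) :=
            mul_le_mul_of_nonneg_right hu2 (Real.rpow_nonneg hu _)
          rw [e2]
          linarith
      rw [he]
      linarith
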